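/- Every reduced spherical convex body R ⊂ S^d of thickness greater than π/2 is smooth, i.e., at every boundary point of R there is exactly one supporting hemisphere. -/

import Mathlib

noncomputable section

/-- Euclidean space ℝⁿ. -/
abbrev Esp (n : ℕ) := EuclideanSpace ℝ (Fin n)

/-- The unit sphere in ℝⁿ. -/
def uSphere (n : ℕ) : Set (Esp n) := {x | ‖x‖ = 1}

/-- Geodesic (angular) distance between unit vectors. -/
def sdist {n : ℕ} (a b : Esp n) : ℝ := Real.arccos (inner ℝ a b : ℝ)

/-- Closed hemisphere with center `m`. -/
def Hemi {n : ℕ} (m : Esp n) : Set (Esp n) := {x ∈ uSphere n | 0 ≤ (inner ℝ m x : ℝ)}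

/-- The great sphere (great circle for n = 3) bounding the hemisphere centered at `m`. -/
def gSphere {n : ℕ} (m : Esp n) : Set (Esp n) := {x ∈ uSphere n | (inner ℝ m x : ℝ) = 0}

/-- The shorter great-circle arc between `a` and `b`: points through which a
minimizing geodesic from `a` to `b` passes. -/
def Arc {n : ℕ} (a b : Esp n) : Set (Esp n) :=
  {x ∈ uSphere n | sdist a x + sdist x b = sdist a b}

/-- Spherically convex set: contained in the sphere, no antipodal pairs, and
closed under taking shorter arcs. -/
def SphConvex {n : ℕ} (C : Set (Esp n)) : Prop :=
  C ⊆ uSphere n ∧ (∀ x ∈ C, -x ∉ C) ∧ ∀ a ∈ C, ∀ b ∈ C, Arc a b ⊆ C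

/-- Interior of a subset of the sphere relative to the sphere. -/
def sphInterior {n : ℕ} (C : Set (Esp n)) : Set (Esp n) :=
  {x ∈ uSphere n | ∃ ε > 0, ∀ y ∈ uSphere n, dist y x < ε → y ∈ C}

/-- Spherical convex body: closed, spherically convex, with nonempty interior
relative to the sphere. -/
def SphBody {n : ℕ} (C : Set (Esp n)) : Prop :=
  SphConvex C ∧ IsClosed C ∧ (sphInterior C).Nonempty

/-- Boundary of a closed subset of the sphere relative to the sphere. -/
def sphBoundary {n : ℕ} (C : Set (Esp n)) : Set (Esp n) := C \ sphInterior C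

/-- `g`, `h` are centers of two distinct non-opposite hemispheres. -/
def IsLune {n : ℕ} (g h : Esp n) : Prop :=
  g ∈ uSphere n ∧ h ∈ uSphere n ∧ g ≠ h ∧ g ≠ -h

/-- The lune determined by hemisphere centers `g` and `h`. -/
def Lune {n : ℕ} (g h : Esp n) : Set (Esp n) := Hemi g ∩ Hemi h

/-- The (d-1)-dimensional hemisphere `G/H` bounding the lune `G ∩ H`:
part of the great sphere of `G` lying in `H`.  (A semicircle when n = 3.) -/
def semic {n : ℕ} (g h : Esp n) : Set (Esp n) :=
  {x ∈ uSphere n | (inner ℝ g x : ℝ) = 0 ∧ 0 ≤ (inner ℝ h x : ℝ)}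

/-- The center of the bounding hemisphere `G/H` of the lune `G ∩ H`:
the normalized projection of `h` onto the hyperplane orthogonal to `g`. -/
def scCenter {n : ℕ} (g h : Esp n) : Esp n :=
  ‖h - (inner ℝ g h : ℝ) • g‖⁻¹ • (h - (inner ℝ g h : ℝ) • g)

/-- Thickness of a lune: distance between the centers of its two bounding
hemispheres. -/
def lthick {n : ℕ} (g h : Esp n) : ℝ := sdist (scCenter g h) (scCenter h g)

/-- Thickness of a convex body: minimal thickness of a lune containing it. -/
def thick {n : ℕ} (C : Set (Esp n)) : ℝ :=
  sInf {t | ∃ g h, IsLune g h ∧ C ⊆ Lune g h ∧ lthick g h = t}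

/-- Reduced spherical body. -/
def Reduced {n : ℕ} (R : Set (Esp n)) : Prop :=
  SphBody R ∧ ∀ Z, SphBody Z → Z ⊆ R → Z ≠ R → thick Z < thick R

/-- Geodesic diameter of a set on the sphere. -/
def sdiam {n : ℕ} (C : Set (Esp n)) : ℝ :=
  sSup {t | ∃ a ∈ C, ∃ b ∈ C, sdist a b = t}

/-- The hemisphere centered at `m` supports `C` at `p`. -/
def SupportsAt {n : ℕ} (C : Set (Esp n)) (m p : Esp n) : Prop :=
  m ∈ uSphere n ∧ C ⊆ Hemi m ∧ p ∈ C ∧ (inner ℝ m p : ℝ) = 0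

/-- The hemisphere centered at `m` supports `C`. -/
def Supports {n : ℕ} (C : Set (Esp n)) (m : Esp n) : Prop := ∃ p, SupportsAt C m p

/-- The width of `C` determined by the supporting hemisphere centered at `m`:
minimal thickness of a lune `M ∩ M*` over supporting hemispheres `M*` of `C`. -/
def sWidth {n : ℕ} (C : Set (Esp n)) (m : Esp n) : ℝ :=
  sInf {t | ∃ h, Supports C h ∧ IsLune m h ∧ C ⊆ Lune m h ∧ lthick m h = t}

/-- `C` is of constant width `w`. -/
def ConstWidth {n : ℕ} (C : Set (Esp n)) (w : ℝ) : Prop :=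
  ∀ m, Supports C m → sWidth C m = w

/-- Extreme point of a spherically convex set. -/
def ExtremeP {n : ℕ} (C : Set (Esp n)) (e : Esp n) : Prop :=
  e ∈ C ∧ ∀ a ∈ C, ∀ b ∈ C, e ∈ Arc a b → e = a ∨ e = b

/-- `p` is a smooth boundary point: exactly one hemisphere supports `C` at `p`. -/
def SmoothPoint {n : ℕ} (C : Set (Esp n)) (p : Esp n) : Prop :=
  ∃! m, SupportsAt C m p

/-- Strict convexity: the boundary contains no nondegenerate great-circle arc. -/
def StrictlyConvexS {n : ℕ} (C : Set (Esp n)) : Prop :=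
  ∀ a ∈ sphBoundary C, ∀ b ∈ sphBoundary C, Arc a b ⊆ sphBoundary C → a = b

end

noncomputable section SRBaux

namespace SRBaux

open Real Set
open scoped InnerProductSpace RealInnerProductSpace

variable {n : ℕ}

lemma sdist_def (a b : Esp n) : sdist a b = Real.arccos ⟪a, b⟫_ℝ := rfl

lemma mem_usphere {x : Esp n} : x ∈ uSphere n ↔ ‖x‖ = 1 := Iff.rfl

lemma mem_hemi {m x : Esp n} : x ∈ Hemi m ↔ ‖x‖ = 1 ∧ 0 ≤ ⟪m, x⟫_ℝ := Iff.rfl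

lemma mem_arc {a b x : Esp n} :
    x ∈ Arc a b ↔ ‖x‖ = 1 ∧ sdist a x + sdist x b = sdist a b := Iff.rfl

lemma inner_self_one {x : Esp n} (hx : ‖x‖ = 1) : ⟪x, x⟫_ℝ = 1 := by
  rw [real_inner_self_eq_norm_mul_norm, hx]; ring

lemma abs_inner_le_one {x y : Esp n} (hx : ‖x‖ = 1) (hy : ‖y‖ = 1) : |⟪x, y⟫_ℝ| ≤ 1 := by
  have h := abs_real_inner_le_norm x y
  rw [hx, hy] at h; simpa using h

lemma inner_le_one {x y : Esp n} (hx : ‖x‖ = 1) (hy : ‖y‖ = 1) : ⟪x, y⟫_ℝ ≤ 1 :=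
  (abs_le.1 (abs_inner_le_one hx hy)).2

lemma neg_one_le_inner {x y : Esp n} (hx : ‖x‖ = 1) (hy : ‖y‖ = 1) : -1 ≤ ⟪x, y⟫_ℝ :=
  (abs_le.1 (abs_inner_le_one hx hy)).1

lemma inner_eq_one_iff {x y : Esp n} (hx : ‖x‖ = 1) (hy : ‖y‖ = 1) :
    ⟪x, y⟫_ℝ = 1 ↔ x = y := by
  constructor
  · intro h
    have h2 : ‖x - y‖ ^ 2 = 0 := by rw [norm_sub_sq_real, hx, hy, h]; ring
    have h3 : ‖x - y‖ = 0 := by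
      have := sq_eq_zero_iff.1 h2
      exact this
    rwa [norm_eq_zero, sub_eq_zero] at h3
  · rintro rfl; exact inner_self_one hx

lemma inner_eq_neg_one_iff {x y : Esp n} (hx : ‖x‖ = 1) (hy : ‖y‖ = 1) :
    ⟪x, y⟫_ℝ = -1 ↔ y = -x := by
  constructor
  · intro h
    have h2 : ‖x + y‖ ^ 2 = 0 := by rw [norm_add_sq_real, hx, hy, h]; ring
    have h3 : ‖x + y‖ = 0 := sq_eq_zero_iff.1 h2
    rw [norm_eq_zero] at h3
    linear_combination (norm := abel) h3
  · rintro rfl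
    rw [inner_neg_right, inner_self_one hx]

lemma arccos_le_arccos' {x y : ℝ} (hxy : x ≤ y) : Real.arccos y ≤ Real.arccos x := by
  rw [Real.arccos_eq_pi_div_two_sub_arcsin, Real.arccos_eq_pi_div_two_sub_arcsin]
  have := Real.monotone_arcsin hxy
  linarith

/-- The thickness of a lune equals `π` minus the distance of the two centers. -/
lemma lthick_eq {g h : Esp n} (hg : ‖g‖ = 1) (hh : ‖h‖ = 1) (hne : g ≠ h)
    (hnin : ⟪g, h⟫_ℝ ≠ -1) : lthick g h = π - Real.arccos ⟪g, h⟫_ℝ := by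
  set c : ℝ := ⟪g, h⟫_ℝ with hc
  have hc1 : c < 1 := lt_of_le_of_ne (inner_le_one hg hh) (fun hh' => hne ((inner_eq_one_iff hg hh).1 hh'))
  have hcm1 : -1 < c := lt_of_le_of_ne (neg_one_le_inner hg hh) (Ne.symm hnin)
  have hs2 : (0:ℝ) < 1 - c ^ 2 := by nlinarith
  have hgh : ⟪h, g⟫_ℝ = c := by rw [real_inner_comm]
  have hvv : ⟪h - c • g, h - c • g⟫_ℝ = 1 - c ^ 2 := by
    simp only [inner_sub_left, inner_sub_right, real_inner_smul_left, real_inner_smul_right,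
      inner_self_one hg, inner_self_one hh, hgh, ← hc]
    ring
  have hww : ⟪g - c • h, g - c • h⟫_ℝ = 1 - c ^ 2 := by
    simp only [inner_sub_left, inner_sub_right, real_inner_smul_left, real_inner_smul_right,
      inner_self_one hg, inner_self_one hh, hgh, ← hc]
    ring
  have hvw : ⟪h - c • g, g - c • h⟫_ℝ = -c * (1 - c ^ 2) := by
    simp only [inner_sub_left, inner_sub_right, real_inner_smul_left, real_inner_smul_right,
      inner_self_one hg, inner_self_one hh, hgh, ← hc]
    ring
  have hnv : ‖h - c • g‖ = Real.sqrt (1 - c ^ 2) := by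
    rw [← Real.sqrt_sq (norm_nonneg _), ← real_inner_self_eq_norm_sq, hvv]
  have hnw : ‖g - c • h‖ = Real.sqrt (1 - c ^ 2) := by
    rw [← Real.sqrt_sq (norm_nonneg _), ← real_inner_self_eq_norm_sq, hww]
  have hsq : Real.sqrt (1 - c ^ 2) * Real.sqrt (1 - c ^ 2) = 1 - c ^ 2 :=
    Real.mul_self_sqrt hs2.le
  have hsqpos : 0 < Real.sqrt (1 - c ^ 2) := Real.sqrt_pos.2 hs2
  have hval : ⟪scCenter g h, scCenter h g⟫_ℝ = -c := by
    show ⟪‖h - (⟪g, h⟫_ℝ) • g‖⁻¹ • (h - (⟪g, h⟫_ℝ) • g),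
        ‖g - (⟪h, g⟫_ℝ) • h‖⁻¹ • (g - (⟪h, g⟫_ℝ) • h)⟫_ℝ = -c
    rw [hgh, ← hc, real_inner_smul_left, real_inner_smul_right, hvw, hnv, hnw]
    field_simp
    rw [Real.sq_sqrt hs2.le]
  show sdist _ _ = _
  rw [sdist_def, hval, Real.arccos_neg]

end SRBaux
end SRBaux

noncomputable section SRBaux2
namespace SRBaux
open Real Set
open scoped InnerProductSpace RealInnerProductSpace
variable {n : ℕ}

lemma arc_self {a x : Esp n} (ha : ‖a‖ = 1) (hx : x ∈ Arc a a) : x = a := by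
  obtain ⟨hxu, hsum⟩ := hx
  have hxu : ‖x‖ = 1 := hxu
  rw [sdist_def, sdist_def, sdist_def, inner_self_one ha, Real.arccos_one] at hsum
  have h1 : Real.arccos ⟪a, x⟫_ℝ = 0 := by
    have h2 := Real.arccos_nonneg ⟪a, x⟫_ℝ
    have h3 := Real.arccos_nonneg ⟪x, a⟫_ℝ
    linarith
  have h2 : (1:ℝ) ≤ ⟪a, x⟫_ℝ := Real.arccos_eq_zero.1 h1
  have h3 : ⟪a, x⟫_ℝ = 1 := le_antisymm (inner_le_one ha hxu) h2
  exact ((inner_eq_one_iff ha hxu).1 h3).symm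

/-- Forward: a point on the arc between `a` and `b` is a nonnegative
combination of `a` and `b`. -/
lemma arc_combo {a b x : Esp n} (ha : ‖a‖ = 1) (hb : ‖b‖ = 1)
    (hne : a ≠ b) (hnin : ⟪a, b⟫_ℝ ≠ -1) (hx : x ∈ Arc a b) :
    ∃ l1 l2 : ℝ, 0 ≤ l1 ∧ 0 ≤ l2 ∧ x = l1 • a + l2 • b := by
  obtain ⟨hxu, hsum⟩ := hx
  have hxu : ‖x‖ = 1 := hxu
  set c : ℝ := ⟪a, b⟫_ℝ with hc
  have hc1 : c < 1 := lt_of_le_of_ne (inner_le_one ha hb)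
    (fun h' => hne ((inner_eq_one_iff ha hb).1 h'))
  have hcm1 : -1 < c := lt_of_le_of_ne (neg_one_le_inner ha hb) (Ne.symm hnin)
  set θ : ℝ := Real.arccos c with hθdef
  have hcosθ : Real.cos θ = c := Real.cos_arccos hcm1.le hc1.le
  have hθpos : 0 < θ := Real.arccos_pos.2 hc1
  have hθpi : θ < π := by
    rcases lt_or_eq_of_le (Real.arccos_le_pi c) with h | h
    · exact h
    · exfalso
      have hcpi : Real.cos θ = -1 := by rw [hθdef, h, Real.cos_pi]
      rw [hcosθ] at hcpi; exact hnin hcpi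
  have hsinθ : 0 < Real.sin θ := Real.sin_pos_of_pos_of_lt_pi hθpos hθpi
  have hsc : Real.sin θ ^ 2 = 1 - c ^ 2 := by
    have := Real.sin_sq_add_cos_sq θ
    rw [hcosθ] at this; linarith
  set e : Esp n := (Real.sin θ)⁻¹ • (b - c • a) with he
  have hae : ⟪a, e⟫_ℝ = 0 := by
    rw [he, real_inner_smul_right, inner_sub_right, real_inner_smul_right,
      inner_self_one ha, ← hc]
    ring
  have hee : ⟪e, e⟫_ℝ = 1 := by
    rw [he, real_inner_smul_left, real_inner_smul_right]
    have hbb : ⟪b - c • a, b - c • a⟫_ℝ = 1 - c ^ 2 := by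
      simp only [inner_sub_left, inner_sub_right, real_inner_smul_left, real_inner_smul_right,
        inner_self_one ha, inner_self_one hb, real_inner_comm a b, ← hc]
      ring
    rw [hbb, ← hsc]
    field_simp
  set φ : ℝ := sdist a x with hφdef
  set ψ : ℝ := sdist x b with hψdef
  have hsum' : φ + ψ = θ := hsum
  have hφ0 : 0 ≤ φ := Real.arccos_nonneg _
  have hψ0 : 0 ≤ ψ := Real.arccos_nonneg _
  have hψpi : ψ ≤ π := Real.arccos_le_pi _
  have hax : ⟪a, x⟫_ℝ = Real.cos φ := by
    rw [hφdef, sdist_def, Real.cos_arccos (neg_one_le_inner ha hxu) (inner_le_one ha hxu)]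
  have hxb : ⟪x, b⟫_ℝ = Real.cos ψ := by
    rw [hψdef, sdist_def, Real.cos_arccos (neg_one_le_inner hxu hb) (inner_le_one hxu hb)]
  have hex : ⟪e, x⟫_ℝ = Real.sin φ := by
    rw [he, real_inner_smul_left, inner_sub_left, real_inner_smul_left]
    have hbx : ⟪b, x⟫_ℝ = Real.cos ψ := by rw [real_inner_comm]; exact hxb
    rw [hbx, hax]
    have hψθφ : ψ = θ - φ := by linarith
    rw [hψθφ, Real.cos_sub, hcosθ]
    field_simp
    ring
  have hres : x - Real.cos φ • a - Real.sin φ • e = 0 := by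
    have h0 : ⟪x - Real.cos φ • a - Real.sin φ • e,
        x - Real.cos φ • a - Real.sin φ • e⟫_ℝ = 0 := by
      have hea : ⟪e, a⟫_ℝ = 0 := by rw [real_inner_comm]; exact hae
      have hxa : ⟪x, a⟫_ℝ = Real.cos φ := by rw [real_inner_comm]; exact hax
      have hxe : ⟪x, e⟫_ℝ = Real.sin φ := by rw [real_inner_comm]; exact hex
      simp only [inner_sub_left, inner_sub_right, real_inner_smul_left, real_inner_smul_right,
        inner_self_one hxu, inner_self_one ha, hee, hae, hea, hax, hxa, hex, hxe]
      have := Real.sin_sq_add_cos_sq φ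
      nlinarith
    exact inner_self_eq_zero.1 h0
  have hxeq : x = Real.cos φ • a + Real.sin φ • e := by
    have h1 : x - (Real.cos φ • a + Real.sin φ • e) = 0 := by
      rw [← hres]; abel
    exact sub_eq_zero.1 h1
  refine ⟨Real.sin ψ / Real.sin θ, Real.sin φ / Real.sin θ,
    div_nonneg (Real.sin_nonneg_of_nonneg_of_le_pi hψ0 hψpi) hsinθ.le,
    div_nonneg (Real.sin_nonneg_of_nonneg_of_le_pi hφ0 (by linarith)) hsinθ.le, ?_⟩
  rw [hxeq, he]
  have hψθφ : ψ = θ - φ := by linarith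
  rw [hψθφ, Real.sin_sub, hcosθ]
  match_scalars
  all_goals field_simp
  all_goals ring

set_option maxHeartbeats 1000000 in
/-- Reverse: the normalization of a nonzero nonnegative combination of `a`, `b`
lies on the arc between them. -/
lemma combo_arc {a b : Esp n} (ha : ‖a‖ = 1) (hb : ‖b‖ = 1)
    (hne : a ≠ b) (hnin : ⟪a, b⟫_ℝ ≠ -1) {l1 l2 : ℝ} (h1 : 0 ≤ l1) (h2 : 0 ≤ l2)
    (hv : l1 • a + l2 • b ≠ 0) :
    ‖l1 • a + l2 • b‖⁻¹ • (l1 • a + l2 • b) ∈ Arc a b := by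
  have hc1 : ⟪a, b⟫_ℝ < 1 := lt_of_le_of_ne (inner_le_one ha hb)
    (fun h' => hne ((inner_eq_one_iff ha hb).1 h'))
  have hcm1 : -1 < ⟪a, b⟫_ℝ := lt_of_le_of_ne (neg_one_le_inner ha hb) (Ne.symm hnin)
  obtain ⟨c, hc⟩ : ∃ c : ℝ, c = ⟪a, b⟫_ℝ := ⟨_, rfl⟩
  rw [← hc] at hc1 hcm1 hnin
  obtain ⟨θ, hθdef⟩ : ∃ θ : ℝ, θ = Real.arccos c := ⟨_, rfl⟩
  have hcosθ : Real.cos θ = c := by rw [hθdef]; exact Real.cos_arccos hcm1.le hc1.le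
  have hθpi : θ ≤ π := by rw [hθdef]; exact Real.arccos_le_pi c
  have hθ0 : 0 ≤ θ := by rw [hθdef]; exact Real.arccos_nonneg c
  have hsinθ0 : 0 ≤ Real.sin θ := Real.sin_nonneg_of_nonneg_of_le_pi hθ0 hθpi
  have hsc : Real.sin θ ^ 2 = 1 - c ^ 2 := by
    have h := Real.sin_sq_add_cos_sq θ
    rw [hcosθ] at h; linarith
  obtain ⟨v, hvdef⟩ : ∃ v : Esp n, v = l1 • a + l2 • b := ⟨_, rfl⟩
  rw [← hvdef] at hv ⊢
  obtain ⟨N, hN⟩ : ∃ N : ℝ, N = ‖v‖ := ⟨_, rfl⟩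
  rw [← hN]
  have hNpos : 0 < N := by rw [hN]; exact norm_pos_iff.2 hv
  have hN2 : N ^ 2 = l1 ^ 2 + 2 * l1 * l2 * c + l2 ^ 2 := by
    rw [hN, ← real_inner_self_eq_norm_sq, hvdef]
    simp only [inner_add_left, inner_add_right, real_inner_smul_left, real_inner_smul_right,
      inner_self_one ha, inner_self_one hb, real_inner_comm a b, ← hc]
    ring
  have hNle : N ≤ l1 + l2 := by
    have h := norm_add_le (l1 • a) (l2 • b)
    rw [← hvdef, ← hN, norm_smul, norm_smul, ha, hb] at h
    rw [Real.norm_eq_abs, Real.norm_eq_abs, abs_of_nonneg h1, abs_of_nonneg h2] at h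
    linarith
  have hNge : l2 - l1 ≤ N := by
    have h3 : ‖l2 • b‖ ≤ ‖v‖ + ‖l1 • a‖ := by
      have hrw : l2 • b = v - l1 • a := by rw [hvdef]; abel
      rw [hrw]
      exact norm_sub_le _ _
    rw [← hN, norm_smul, norm_smul, ha, hb] at h3
    rw [Real.norm_eq_abs, Real.norm_eq_abs, abs_of_nonneg h1, abs_of_nonneg h2] at h3
    linarith
  obtain ⟨x, hx⟩ : ∃ x : Esp n, x = N⁻¹ • v := ⟨_, rfl⟩
  rw [← hx]
  have hxu : ‖x‖ = 1 := by
    rw [hx, norm_smul, Real.norm_eq_abs, abs_of_nonneg (inv_nonneg.2 hNpos.le), ← hN,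
      inv_mul_cancel₀ hNpos.ne']
  have hax : ⟪a, x⟫_ℝ = (l1 + l2 * c) / N := by
    rw [hx, real_inner_smul_right, hvdef]
    simp only [inner_add_right, real_inner_smul_right, inner_self_one ha, ← hc]
    field_simp
  have hxb : ⟪x, b⟫_ℝ = (l1 * c + l2) / N := by
    rw [hx, real_inner_smul_left, hvdef]
    simp only [inner_add_left, real_inner_smul_left, inner_self_one hb, real_inner_comm a b, ← hc]
    field_simp
  have haxm1 : -1 ≤ ⟪a, x⟫_ℝ := neg_one_le_inner ha hxu
  have hax1 : ⟪a, x⟫_ℝ ≤ 1 := inner_le_one ha hxu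
  obtain ⟨φ, hφdef⟩ : ∃ φ : ℝ, φ = sdist a x := ⟨_, rfl⟩
  have hcosφ : Real.cos φ = ⟪a, x⟫_ℝ := by
    rw [hφdef, sdist_def, Real.cos_arccos haxm1 hax1]
  have hsinφ : Real.sin φ = l2 * Real.sin θ / N := by
    rw [hφdef, sdist_def, Real.sin_arccos]
    have key : 1 - (⟪a, x⟫_ℝ) ^ 2 = (l2 * Real.sin θ / N) ^ 2 := by
      rw [hax]
      field_simp
      nlinarith [hN2, hsc]
    rw [key, Real.sqrt_sq (by positivity)]
  have hφθ : φ ≤ θ := by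
    have hcge : c ≤ ⟪a, x⟫_ℝ := by
      rw [hax, le_div_iff₀ hNpos]
      rcases le_or_gt 0 c with hc0 | hc0
      · have k1 : N * c ≤ (l1 + l2) * c := mul_le_mul_of_nonneg_right hNle hc0
        have k1' : (l1 + l2) * c = l1 * c + l2 * c := by ring
        have k2 : l1 * c ≤ l1 := mul_le_of_le_one_right h1 hc1.le
        linarith
      · rcases le_or_gt 0 (l2 - N) with hdn | hdn
        · have k := mul_le_mul_of_nonneg_right hcm1.le hdn
          have k2 : c * (l2 - N) = l2 * c - N * c := by ring
          have k3 : (-1 : ℝ) * (l2 - N) = N - l2 := by ring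
          rw [k2, k3] at k
          linarith
        · have k := mul_pos_of_neg_of_neg hc0 hdn
          have k2 : c * (l2 - N) = l2 * c - N * c := by ring
          rw [k2] at k
          linarith
    rw [hφdef, sdist_def, hθdef]
    exact arccos_le_arccos' hcge
  have hφ0 : 0 ≤ φ := by rw [hφdef, sdist_def]; exact Real.arccos_nonneg _
  have hxbcos : ⟪x, b⟫_ℝ = Real.cos (θ - φ) := by
    rw [Real.cos_sub, hcosθ, hcosφ, hax, hsinφ, hxb]
    field_simp
    nlinarith [hsc]
  have hsxb : sdist x b = θ - φ := by
    rw [sdist_def, hxbcos, Real.arccos_cos (by linarith) (by linarith)]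
  refine ⟨hxu, ?_⟩
  rw [← hφdef, hsxb, sdist_def, ← hc, ← hθdef]
  ring

end SRBaux
end SRBaux2

noncomputable section SRBaux3
namespace SRBaux
open Real Set
open scoped InnerProductSpace RealInnerProductSpace
variable {n : ℕ}

/-- The cone spanned by a subset of the sphere. -/
def cone (R : Set (Esp n)) : Set (Esp n) := {v | ∃ t : ℝ, 0 ≤ t ∧ ∃ x ∈ R, v = t • x}

lemma sub_mem_cone {R : Set (Esp n)} {x : Esp n} (hx : x ∈ R) : x ∈ cone R :=
  ⟨1, zero_le_one, x, hx, (one_smul _ _).symm⟩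

lemma zero_mem_cone {R : Set (Esp n)} (hR : R.Nonempty) : (0 : Esp n) ∈ cone R :=
  ⟨0, le_rfl, hR.choose, hR.choose_spec, (zero_smul _ _).symm⟩

lemma smul_mem_cone {R : Set (Esp n)} {v : Esp n} (hv : v ∈ cone R) {τ : ℝ} (hτ : 0 ≤ τ) :
    τ • v ∈ cone R := by
  obtain ⟨t, ht, x, hx, rfl⟩ := hv
  exact ⟨τ * t, mul_nonneg hτ ht, x, hx, smul_smul τ t x⟩

lemma cone_convex {R : Set (Esp n)} (hRs : R ⊆ uSphere n) (hRa : ∀ x ∈ R, -x ∉ R)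
    (hRarc : ∀ a ∈ R, ∀ b ∈ R, Arc a b ⊆ R) (hRne : R.Nonempty) :
    Convex ℝ (cone R) := by
  intro v₁ hv₁ v₂ hv₂ s t hs ht hst
  obtain ⟨t₁, ht₁, x₁, hx₁, rfl⟩ := hv₁
  obtain ⟨t₂, ht₂, x₂, hx₂, rfl⟩ := hv₂
  have hx₁u : ‖x₁‖ = 1 := hRs hx₁
  have hx₂u : ‖x₂‖ = 1 := hRs hx₂
  set c₁ : ℝ := s * t₁ with hc₁
  set c₂ : ℝ := t * t₂ with hc₂
  have hc₁0 : 0 ≤ c₁ := mul_nonneg hs ht₁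
  have hc₂0 : 0 ≤ c₂ := mul_nonneg ht ht₂
  have hw : s • t₁ • x₁ + t • t₂ • x₂ = c₁ • x₁ + c₂ • x₂ := by
    rw [smul_smul, smul_smul]
  rw [hw]
  by_cases h12 : x₁ = x₂
  · subst h12
    rw [← add_smul]
    exact ⟨c₁ + c₂, by linarith, x₁, hx₁, rfl⟩
  by_cases h0 : c₁ • x₁ + c₂ • x₂ = 0
  · rw [h0]; exact zero_mem_cone hRne
  have hnin : ⟪x₁, x₂⟫_ℝ ≠ -1 := by
    intro hcon
    have := (inner_eq_neg_one_iff hx₁u hx₂u).1 hcon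
    exact hRa x₁ hx₁ (this ▸ hx₂)
  have harc := combo_arc hx₁u hx₂u h12 hnin hc₁0 hc₂0 h0
  have hmem : ‖c₁ • x₁ + c₂ • x₂‖⁻¹ • (c₁ • x₁ + c₂ • x₂) ∈ R := hRarc x₁ hx₁ x₂ hx₂ harc
  refine ⟨‖c₁ • x₁ + c₂ • x₂‖, norm_nonneg _, _, hmem, ?_⟩
  rw [smul_inv_smul₀ (norm_ne_zero_iff.2 h0)]

lemma cone_closed {R : Set (Esp n)} (hRs : R ⊆ uSphere n) (hRc : IsClosed R)
    (hRne : R.Nonempty) : IsClosed (cone R) := by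
  rw [← isSeqClosed_iff_isClosed]
  intro f v hf hfv
  by_cases hv0 : v = 0
  · rw [hv0]; exact zero_mem_cone hRne
  · have hnv : 0 < ‖v‖ := norm_pos_iff.2 hv0
    have hnorm : Filter.Tendsto (fun k => ‖f k‖) Filter.atTop (nhds ‖v‖) := hfv.norm
    -- extract the points
    choose tk htk xk hxk hfk using hf
    have hxku : ∀ k, ‖xk k‖ = 1 := fun k => hRs (hxk k)
    have htknorm : ∀ k, ‖f k‖ = tk k := by
      intro k
      rw [hfk k, norm_smul, Real.norm_eq_abs, abs_of_nonneg (htk k), hxku k, mul_one]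
    have htklim : Filter.Tendsto tk Filter.atTop (nhds ‖v‖) := by
      refine hnorm.congr ?_
      intro k; exact htknorm k
    have hik : Filter.Tendsto (fun k => (tk k)⁻¹) Filter.atTop (nhds ‖v‖⁻¹) :=
      htklim.inv₀ hnv.ne'
    have hxklim : Filter.Tendsto xk Filter.atTop (nhds (‖v‖⁻¹ • v)) := by
      have hev : ∀ᶠ k in Filter.atTop, (tk k)⁻¹ • f k = xk k := by
        have hev0 : ∀ᶠ k in Filter.atTop, 0 < tk k := by
          have := htklim.eventually_const_lt (show ‖v‖ / 2 < ‖v‖ by linarith)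
          filter_upwards [this] with k hk
          linarith
        filter_upwards [hev0] with k hk
        rw [hfk k, smul_smul, inv_mul_cancel₀ hk.ne', one_smul]
      have : Filter.Tendsto (fun k => (tk k)⁻¹ • f k) Filter.atTop (nhds (‖v‖⁻¹ • v)) :=
        hik.smul hfv
      exact Filter.Tendsto.congr' hev this
    have hxmem : ‖v‖⁻¹ • v ∈ R := hRc.mem_of_tendsto hxklim (Filter.Eventually.of_forall hxk)
    exact ⟨‖v‖, norm_nonneg v, _, hxmem, (smul_inv_smul₀ hnv.ne' v).symm⟩

/-- Bipolar: a vector with nonnegative inner product against every "normal" of `R`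
lies in the cone of `R`. -/
lemma mem_cone_of_dual {R : Set (Esp n)} (hRs : R ⊆ uSphere n) (hRa : ∀ x ∈ R, -x ∉ R)
    (hRarc : ∀ a ∈ R, ∀ b ∈ R, Arc a b ⊆ R) (hRc : IsClosed R) (hRne : R.Nonempty)
    {v : Esp n} (hv : ∀ y : Esp n, (∀ z ∈ R, 0 ≤ ⟪y, z⟫_ℝ) → 0 ≤ ⟪v, y⟫_ℝ) :
    v ∈ cone R := by
  by_contra hvK
  obtain ⟨f, u, hfu, huv⟩ := geometric_hahn_banach_closed_point
    (cone_convex hRs hRa hRarc hRne) (cone_closed hRs hRc hRne) hvK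
  have hu0 : 0 < u := by
    have h0 := hfu 0 (zero_mem_cone hRne)
    rw [map_zero] at h0
    exact h0
  have hfle : ∀ z ∈ cone R, f z ≤ 0 := by
    intro z hz
    by_contra hfz
    push_neg at hfz
    have hzz := hfu (((u + 1) / f z) • z) (smul_mem_cone hz (by positivity))
    rw [map_smul] at hzz
    rw [smul_eq_mul, div_mul_cancel₀ _ hfz.ne'] at hzz
    linarith
  set y : Esp n := -(InnerProductSpace.toDual ℝ (Esp n)).symm f with hy
  have hyw : ∀ w : Esp n, ⟪y, w⟫_ℝ = -(f w) := by
    intro w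
    rw [hy, inner_neg_left, InnerProductSpace.toDual_symm_apply]
  have hyD : ∀ z ∈ R, 0 ≤ ⟪y, z⟫_ℝ := by
    intro z hz
    rw [hyw]
    have := hfle z (sub_mem_cone hz)
    linarith
  have := hv y hyD
  rw [real_inner_comm, hyw] at this
  linarith

end SRBaux
end SRBaux3

noncomputable section SRBaux4
namespace SRBaux
open Real Set
open scoped InnerProductSpace RealInnerProductSpace
variable {n : ℕ}

lemma sphInterior_subset {C : Set (Esp n)} : sphInterior C ⊆ C := by
  rintro x ⟨hxu, ε, hε, hball⟩
  exact hball x hxu (by simpa using hε)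

lemma thick_bddBelow (C : Set (Esp n)) :
    BddBelow {t | ∃ g h, IsLune g h ∧ C ⊆ Lune g h ∧ lthick g h = t} := by
  refine ⟨0, ?_⟩
  rintro t ⟨g, h, _, _, rfl⟩
  exact Real.arccos_nonneg _

lemma thick_le {C : Set (Esp n)} {g h : Esp n} (hlune : IsLune g h)
    (hsub : C ⊆ Lune g h) : thick C ≤ lthick g h :=
  csInf_le (thick_bddBelow C) ⟨g, h, hlune, hsub, rfl⟩

/-- A hemisphere containing `R` has strictly positive inner product with any
point of the relative interior of `R`. -/
lemma interior_inner_pos {R : Set (Esp n)} {x₀ : Esp n} (hx₀ : x₀ ∈ sphInterior R)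
    {m : Esp n} (hm : ‖m‖ = 1) (hmn : ∀ z ∈ R, 0 ≤ ⟪m, z⟫_ℝ) : 0 < ⟪m, x₀⟫_ℝ := by
  obtain ⟨hx₀u, ε, hε, hball⟩ := hx₀
  have hx₀u : ‖x₀‖ = 1 := hx₀u
  have hx₀R : x₀ ∈ R := hball x₀ hx₀u (by simpa using hε)
  rcases (hmn x₀ hx₀R).lt_or_eq with h | h
  · exact h
  exfalso
  set τ : ℝ := min (ε / 3) 1 with hτ
  have hτ0 : 0 < τ := lt_min (by linarith) one_pos
  have hτ1 : τ ≤ 1 := min_le_right _ _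
  have hτε : τ ≤ ε / 3 := min_le_left _ _
  set v : Esp n := x₀ - τ • m with hv
  have hmv : ⟪m, v⟫_ℝ = -τ := by
    rw [hv, inner_sub_right, real_inner_smul_right, inner_self_one hm, ← h]
    ring
  have hvsq : ‖v‖ ^ 2 = 1 + τ ^ 2 := by
    rw [← real_inner_self_eq_norm_sq, hv]
    simp only [inner_sub_left, inner_sub_right, real_inner_smul_left, real_inner_smul_right,
      inner_self_one hm, inner_self_one hx₀u, real_inner_comm m x₀, ← h]
    ring
  have hvpos : 1 ≤ ‖v‖ := by nlinarith [norm_nonneg v]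
  have hvle : ‖v‖ ≤ 1 + τ := by nlinarith [norm_nonneg v]
  set y : Esp n := ‖v‖⁻¹ • v with hy
  have hyu : ‖y‖ = 1 := by
    rw [hy, norm_smul, Real.norm_eq_abs, abs_of_nonneg (by positivity),
      inv_mul_cancel₀ (by linarith)]
  have hyx : dist y x₀ < ε := by
    have h1 : ‖y - v‖ = ‖v‖ - 1 := by
      have : y - v = (‖v‖⁻¹ - 1) • v := by rw [hy, sub_smul, one_smul]
      rw [this, norm_smul, Real.norm_eq_abs]
      have hinv : ‖v‖⁻¹ ≤ 1 := by
        rw [inv_le_one_iff₀]; right; exact hvpos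
      rw [abs_of_nonpos (by linarith)]
      have hvne : ‖v‖ ≠ 0 := by linarith
      field_simp
      ring
    have h2 : ‖v - x₀‖ = τ := by
      have : v - x₀ = -(τ • m) := by rw [hv]; abel
      rw [this, norm_neg, norm_smul, Real.norm_eq_abs, abs_of_nonneg hτ0.le, hm, mul_one]
    have h3 : dist y x₀ ≤ ‖y - v‖ + ‖v - x₀‖ := by
      rw [dist_eq_norm]
      have : y - x₀ = (y - v) + (v - x₀) := by abel
      rw [this]
      exact norm_add_le _ _
    rw [h1, h2] at h3
    have : ‖v‖ - 1 ≤ τ := by linarith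
    linarith
  have hyR : y ∈ R := hball y hyu hyx
  have := hmn y hyR
  rw [hy, real_inner_smul_right, hmv] at this
  have hv0 : (0:ℝ) < ‖v‖ := by linarith
  have hvinv := inv_pos.2 hv0
  nlinarith [mul_pos hvinv hτ0]

/-- Any two hemispheres containing a body of thickness `w` have inner product at
least `cos (π - w)`. -/
lemma pair_bound {R : Set (Esp n)} (hRs : R ⊆ uSphere n)
    {x₀ : Esp n} (hx₀ : x₀ ∈ sphInterior R)
    {x y : Esp n} (hx : ‖x‖ = 1) (hxn : ∀ z ∈ R, 0 ≤ ⟪x, z⟫_ℝ)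
    (hy : ‖y‖ = 1) (hyn : ∀ z ∈ R, 0 ≤ ⟪y, z⟫_ℝ) (hw : 0 ≤ thick R) :
    Real.cos (π - thick R) ≤ ⟪x, y⟫_ℝ := by
  have hx₀R : x₀ ∈ R := sphInterior_subset hx₀
  by_cases hxy : x = y
  · subst hxy
    rw [inner_self_one hx]
    exact Real.cos_le_one _
  by_cases hm : ⟪x, y⟫_ℝ = -1
  · exfalso
    have hyx : y = -x := (inner_eq_neg_one_iff hx hy).1 hm
    have h1 := interior_inner_pos hx₀ hx hxn
    have h2 := hyn x₀ hx₀R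
    rw [hyx, inner_neg_left] at h2
    linarith
  have hxny : x ≠ -y := by
    intro hcon
    apply hm
    rw [hcon, inner_neg_left, inner_self_one hy]  -- ⟪-y,y⟫ = -1 : need x = -y so ⟪x,y⟫ = ⟪-y,y⟫
  have hlune : IsLune x y := ⟨hx, hy, hxy, hxny⟩
  have hsub : R ⊆ Lune x y := by
    intro z hz
    exact ⟨⟨hRs hz, hxn z hz⟩, ⟨hRs hz, hyn z hz⟩⟩
  have hle := thick_le hlune hsub
  rw [lthick_eq hx hy hxy hm] at hle
  have harc : Real.arccos ⟪x, y⟫_ℝ ≤ π - thick R := by linarith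
  have hcos := Real.cos_le_cos_of_nonneg_of_le_pi (Real.arccos_nonneg ⟪x, y⟫_ℝ)
    (by linarith [Real.pi_pos] : π - thick R ≤ π) harc
  rwa [Real.cos_arccos (neg_one_le_inner hx hy) (inner_le_one hx hy)] at hcos

lemma thick_nonneg_of_mem {C : Set (Esp n)}
    (hne : {t | ∃ g h, IsLune g h ∧ C ⊆ Lune g h ∧ lthick g h = t}.Nonempty) :
    0 ≤ thick C :=
  le_csInf hne (by rintro t ⟨g, h, _, _, rfl⟩; exact Real.arccos_nonneg _)

end SRBaux
end SRBaux4

noncomputable section SRBaux5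
namespace SRBaux
open Real Set Filter
open scoped InnerProductSpace RealInnerProductSpace Topology
variable {n : ℕ}

/-- Key duality bound: if `u` makes inner product at least `α` with every normal
of `R`, then any two hemispheres containing `R ∩ Hemi u` make inner product at
least `α` with each other. -/
lemma dual_pair_bound {R : Set (Esp n)} (hRs : R ⊆ uSphere n) (hRa : ∀ x ∈ R, -x ∉ R)
    (hRarc : ∀ a ∈ R, ∀ b ∈ R, Arc a b ⊆ R) (hRc : IsClosed R) (hRne : R.Nonempty)
    {u : Esp n} (hu : ‖u‖ = 1) {α : ℝ} (hα0 : 0 ≤ α) (hα1 : α ≤ 1)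
    (hNpair : ∀ x y : Esp n, ‖x‖ = 1 → (∀ z ∈ R, 0 ≤ ⟪x, z⟫_ℝ) → ‖y‖ = 1 →
      (∀ z ∈ R, 0 ≤ ⟪y, z⟫_ℝ) → α ≤ ⟪x, y⟫_ℝ)
    (hNu : ∀ x : Esp n, ‖x‖ = 1 → (∀ z ∈ R, 0 ≤ ⟪x, z⟫_ℝ) → α ≤ ⟪u, x⟫_ℝ)
    {g h : Esp n} (hgu : ‖g‖ = 1) (hhu : ‖h‖ = 1)
    (hgZ : ∀ z ∈ R, 0 ≤ ⟪u, z⟫_ℝ → 0 ≤ ⟪g, z⟫_ℝ)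
    (hhZ : ∀ z ∈ R, 0 ≤ ⟪u, z⟫_ℝ → 0 ≤ ⟪h, z⟫_ℝ) :
    α ≤ ⟪g, h⟫_ℝ := by
  set Q : Set (Esp n) :=
    {q | ∃ a : Esp n, (∀ z ∈ R, 0 ≤ ⟪a, z⟫_ℝ) ∧ ∃ s : ℝ, 0 ≤ s ∧ q = a + s • u} with hQdef
  have hQconv : Convex ℝ Q := by
    rintro q₁ ⟨a₁, ha₁, s₁, hs₁, rfl⟩ q₂ ⟨a₂, ha₂, s₂, hs₂, rfl⟩ σ τ hσ hτ hστ
    refine ⟨σ • a₁ + τ • a₂, ?_, σ * s₁ + τ * s₂, by positivity, ?_⟩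
    · intro z hz
      rw [inner_add_left, real_inner_smul_left, real_inner_smul_left]
      have := ha₁ z hz; have := ha₂ z hz
      positivity
    · rw [smul_add, smul_add, smul_smul, smul_smul, add_smul]
      abel
  have hQzero : (0 : Esp n) ∈ Q := by
    refine ⟨0, ?_, 0, le_rfl, by simp⟩
    intro z hz
    rw [inner_zero_left]
  have hQsmul : ∀ q ∈ Q, ∀ κ : ℝ, 0 ≤ κ → κ • q ∈ Q := by
    rintro q ⟨a, ha, s, hs, rfl⟩ κ hκ
    refine ⟨κ • a, ?_, κ * s, by positivity, ?_⟩
    · intro z hz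
      rw [real_inner_smul_left]
      have := ha z hz
      positivity
    · rw [smul_add, smul_smul]
  have hQu : u ∈ Q := by
    refine ⟨0, ?_, 1, zero_le_one, by simp⟩
    intro z hz; rw [inner_zero_left]
  have hQD : ∀ a : Esp n, (∀ z ∈ R, 0 ≤ ⟪a, z⟫_ℝ) → a ∈ Q := by
    intro a ha
    exact ⟨a, ha, 0, le_rfl, by simp⟩
  -- Step A: membership in the closure of Q
  have hmemM : ∀ w : Esp n, (∀ z ∈ R, 0 ≤ ⟪u, z⟫_ℝ → 0 ≤ ⟪w, z⟫_ℝ) → w ∈ closure Q := by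
    intro w hw
    by_contra hwM
    obtain ⟨f, s0, hfs, hsw⟩ := geometric_hahn_banach_closed_point
      (hQconv.closure) isClosed_closure hwM
    have hs0 : 0 < s0 := by
      have h0 := hfs 0 (subset_closure hQzero)
      rwa [map_zero] at h0
    have hfle : ∀ q ∈ Q, f q ≤ 0 := by
      intro q hq
      by_contra hfq
      push_neg at hfq
      have hzz := hfs (((s0 + 1) / f q) • q) (subset_closure (hQsmul q hq _ (by positivity)))
      rw [map_smul, smul_eq_mul, div_mul_cancel₀ _ hfq.ne'] at hzz
      linarith
    set y : Esp n := -(InnerProductSpace.toDual ℝ (Esp n)).symm f with hy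
    have hyw : ∀ w' : Esp n, ⟪y, w'⟫_ℝ = -(f w') := by
      intro w'
      rw [hy, inner_neg_left, InnerProductSpace.toDual_symm_apply]
    have hyD : ∀ a : Esp n, (∀ z ∈ R, 0 ≤ ⟪a, z⟫_ℝ) → 0 ≤ ⟪y, a⟫_ℝ := by
      intro a ha
      rw [hyw]
      have := hfle a (hQD a ha)
      linarith
    have hycone : y ∈ cone R := by
      apply mem_cone_of_dual hRs hRa hRarc hRc hRne
      intro a ha
      exact hyD a ha
    obtain ⟨t, ht, x, hxR, hyeq⟩ := hycone
    have hyu : 0 ≤ ⟪y, u⟫_ℝ := by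
      rw [hyw]
      have := hfle u hQu
      linarith
    have hwy : ⟪y, w⟫_ℝ < 0 := by
      rw [hyw]
      linarith
    rcases ht.lt_or_eq with ht0 | ht0
    · have hux : 0 ≤ ⟪u, x⟫_ℝ := by
        rw [hyeq, real_inner_smul_left] at hyu
        rw [real_inner_comm]
        nlinarith
      have hwx : 0 ≤ ⟪w, x⟫_ℝ := hw x hxR hux
      rw [hyeq, real_inner_smul_left] at hwy
      rw [real_inner_comm x w] at hwx
      nlinarith
    · rw [hyeq, ← ht0, zero_smul, inner_zero_left] at hwy
      linarith
  -- Step B: the pairwise bound on Q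
  have hDD : ∀ a a' : Esp n, (∀ z ∈ R, 0 ≤ ⟪a, z⟫_ℝ) → (∀ z ∈ R, 0 ≤ ⟪a', z⟫_ℝ) →
      α * (‖a‖ * ‖a'‖) ≤ ⟪a, a'⟫_ℝ := by
    intro a a' ha ha'
    by_cases ha0 : a = 0
    · simp [ha0]
    by_cases ha'0 : a' = 0
    · simp [ha'0]
    have hna : 0 < ‖a‖ := norm_pos_iff.2 ha0
    have hna' : 0 < ‖a'‖ := norm_pos_iff.2 ha'0
    have h1 : α ≤ ‖a‖⁻¹ * (‖a'‖⁻¹ * ⟪a, a'⟫_ℝ) := by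
      have hh := hNpair (‖a‖⁻¹ • a) (‖a'‖⁻¹ • a')
        (by rw [norm_smul, Real.norm_eq_abs, abs_of_nonneg (by positivity),
          inv_mul_cancel₀ hna.ne'])
        (fun z hz => by rw [real_inner_smul_left]; have := ha z hz; positivity)
        (by rw [norm_smul, Real.norm_eq_abs, abs_of_nonneg (by positivity),
          inv_mul_cancel₀ hna'.ne'])
        (fun z hz => by rw [real_inner_smul_left]; have := ha' z hz; positivity)
      rwa [real_inner_smul_left, real_inner_smul_right] at hh
    calc α * (‖a‖ * ‖a'‖) ≤ (‖a‖⁻¹ * (‖a'‖⁻¹ * ⟪a, a'⟫_ℝ)) * (‖a‖ * ‖a'‖) :=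
          mul_le_mul_of_nonneg_right h1 (by positivity)
      _ = ⟪a, a'⟫_ℝ := by field_simp
  have hDu : ∀ a : Esp n, (∀ z ∈ R, 0 ≤ ⟪a, z⟫_ℝ) → α * ‖a‖ ≤ ⟪u, a⟫_ℝ := by
    intro a ha
    by_cases ha0 : a = 0
    · simp [ha0]
    have hna : 0 < ‖a‖ := norm_pos_iff.2 ha0
    have h1 : α ≤ ‖a‖⁻¹ * ⟪u, a⟫_ℝ := by
      have hh := hNu (‖a‖⁻¹ • a)
        (by rw [norm_smul, Real.norm_eq_abs, abs_of_nonneg (by positivity),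
          inv_mul_cancel₀ hna.ne'])
        (fun z hz => by rw [real_inner_smul_left]; have := ha z hz; positivity)
      rwa [real_inner_smul_right] at hh
    calc α * ‖a‖ ≤ (‖a‖⁻¹ * ⟪u, a⟫_ℝ) * ‖a‖ := mul_le_mul_of_nonneg_right h1 hna.le
      _ = ⟪u, a⟫_ℝ := by field_simp
  have hQbound : ∀ q ∈ Q, ∀ q' ∈ Q, α * (‖q‖ * ‖q'‖) ≤ ⟪q, q'⟫_ℝ := by
    rintro q ⟨a, haD, s, hs, rfl⟩ q' ⟨a', ha'D, s', hs', rfl⟩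
    have hexp : ⟪a + s • u, a' + s' • u⟫_ℝ =
        ⟪a, a'⟫_ℝ + s' * ⟪u, a⟫_ℝ + s * ⟪u, a'⟫_ℝ + s * s' := by
      simp only [inner_add_left, inner_add_right, real_inner_smul_left, real_inner_smul_right,
        inner_self_one hu, real_inner_comm a u]
      ring
    have hqa : ‖a + s • u‖ ≤ ‖a‖ + s := by
      have := norm_add_le a (s • u)
      rw [norm_smul, Real.norm_eq_abs, abs_of_nonneg hs, hu, mul_one] at this
      exact this
    have hqa' : ‖a' + s' • u‖ ≤ ‖a'‖ + s' := by
      have := norm_add_le a' (s' • u)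
      rw [norm_smul, Real.norm_eq_abs, abs_of_nonneg hs', hu, mul_one] at this
      exact this
    have step1 : α * (‖a + s • u‖ * ‖a' + s' • u‖) ≤ α * ((‖a‖ + s) * (‖a'‖ + s')) := by
      apply mul_le_mul_of_nonneg_left _ hα0
      exact mul_le_mul hqa hqa' (norm_nonneg _) (by positivity)
    have hb1 := hDD a a' haD ha'D
    have k1 : s' * (α * ‖a‖) ≤ s' * ⟪u, a⟫_ℝ :=
      mul_le_mul_of_nonneg_left (hDu a haD) hs'
    have k2 : s * (α * ‖a'‖) ≤ s * ⟪u, a'⟫_ℝ :=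
      mul_le_mul_of_nonneg_left (hDu a' ha'D) hs
    have k3 : α * (s * s') ≤ s * s' := by
      have := mul_le_mul_of_nonneg_right hα1 (mul_nonneg hs hs')
      linarith
    have e1 : α * ((‖a‖ + s) * (‖a'‖ + s')) =
        α * (‖a‖ * ‖a'‖) + s' * (α * ‖a‖) + s * (α * ‖a'‖) + α * (s * s') := by ring
    rw [hexp]
    linarith
  -- Step C: pass to the closure
  have hgM := hmemM g hgZ
  have hhM := hmemM h hhZ
  obtain ⟨qk, hqk, hqklim⟩ := mem_closure_iff_seq_limit.1 hgM
  obtain ⟨qk', hqk', hqklim'⟩ := mem_closure_iff_seq_limit.1 hhM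
  have hineq : ∀ k, α * (‖qk k‖ * ‖qk' k‖) ≤ ⟪qk k, qk' k⟫_ℝ :=
    fun k => hQbound _ (hqk k) _ (hqk' k)
  have hlim1 : Tendsto (fun k => α * (‖qk k‖ * ‖qk' k‖)) atTop (𝓝 (α * (‖g‖ * ‖h‖))) :=
    ((hqklim.norm).mul (hqklim'.norm)).const_mul α
  have hlim2 : Tendsto (fun k => ⟪qk k, qk' k⟫_ℝ) atTop (𝓝 ⟪g, h⟫_ℝ) :=
    hqklim.inner hqklim'
  have hfin := le_of_tendsto_of_tendsto' hlim1 hlim2 hineq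
  rwa [hgu, hhu, mul_one, mul_one] at hfin

end SRBaux
end SRBaux5

noncomputable section SRBaux6
namespace SRBaux
open Real Set Filter
open scoped InnerProductSpace RealInnerProductSpace Topology
variable {n : ℕ}

/-- Completeness from reducedness: a unit vector making inner product at least
`cos (π - thick R)` with every normal of `R` (and positive product with an
interior point) is itself a normal of `R`. -/
lemma hemi_of_alpha {R : Set (Esp n)} (hred : Reduced R) (ht : π / 2 < thick R)
    {x₀ : Esp n} (hx₀ : x₀ ∈ sphInterior R)
    {u : Esp n} (hu : ‖u‖ = 1) (hux₀ : 0 < ⟪u, x₀⟫_ℝ)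
    (hall : ∀ x : Esp n, ‖x‖ = 1 → (∀ z ∈ R, 0 ≤ ⟪x, z⟫_ℝ) →
      Real.cos (π - thick R) ≤ ⟪u, x⟫_ℝ) :
    ∀ z ∈ R, 0 ≤ ⟪u, z⟫_ℝ := by
  obtain ⟨⟨hRs, hRa, hRarc⟩, hRc, -⟩ := hred.1
  have hRne : R.Nonempty := ⟨x₀, sphInterior_subset hx₀⟩
  by_contra hcon
  push_neg at hcon
  obtain ⟨z₀, hz₀R, hz₀⟩ := hcon
  -- basic facts about the thickness
  have hSne : {t | ∃ g h, IsLune g h ∧ R ⊆ Lune g h ∧ lthick g h = t}.Nonempty := by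
    by_contra hS
    rw [Set.not_nonempty_iff_eq_empty] at hS
    have : thick R = 0 := by rw [thick, hS, Real.sInf_empty]
    rw [this] at ht
    linarith [Real.pi_pos]
  have hw0 : 0 ≤ thick R := thick_nonneg_of_mem hSne
  have hβ0 : 0 ≤ π - thick R := by
    obtain ⟨t₀, g₀, h₀, hl₀, hsub₀, ht₀⟩ := hSne
    have hle := thick_le hl₀ hsub₀
    have h2 : lthick g₀ h₀ ≤ π := Real.arccos_le_pi _
    linarith
  have hα0 : 0 < Real.cos (π - thick R) :=
    Real.cos_pos_of_mem_Ioo ⟨by linarith [Real.pi_pos], by linarith⟩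
  have hα1 : Real.cos (π - thick R) ≤ 1 := Real.cos_le_one _
  -- the cut body Z = R ∩ Hemi u
  have hZconv : SphConvex (R ∩ Hemi u) := by
    refine ⟨fun x hx => hRs hx.1, fun x hx hc => hRa x hx.1 hc.1, ?_⟩
    intro a ha b hb x hx
    refine ⟨hRarc a ha.1 b hb.1 hx, hx.1, ?_⟩
    by_cases hab : a = b
    · subst hab
      have := arc_self (hRs ha.1) hx
      rw [this]
      exact ha.2.2
    · have hnin : ⟪a, b⟫_ℝ ≠ -1 := by
        intro hcon'
        have := (inner_eq_neg_one_iff (hRs ha.1) (hRs hb.1)).1 hcon'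
        exact hRa a ha.1 (this ▸ hb.1)
      obtain ⟨l1, l2, hl1, hl2, hxe⟩ := arc_combo (hRs ha.1) (hRs hb.1) hab hnin hx
      rw [hxe, inner_add_right, real_inner_smul_right, real_inner_smul_right]
      have := ha.2.2; have := hb.2.2
      positivity
  have hZclosed : IsClosed (R ∩ Hemi u) := by
    refine hRc.inter ?_
    have hrw : Hemi u = {x : Esp n | ‖x‖ = 1} ∩ {x : Esp n | 0 ≤ ⟪u, x⟫_ℝ} := rfl
    rw [hrw]
    exact (isClosed_eq continuous_norm continuous_const).inter
      (isClosed_le continuous_const (Continuous.inner continuous_const continuous_id))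
  have hZint : x₀ ∈ sphInterior (R ∩ Hemi u) := by
    obtain ⟨hx₀u, ε, hε, hball⟩ := hx₀
    refine ⟨hx₀u, min ε ⟪u, x₀⟫_ℝ, lt_min hε hux₀, ?_⟩
    intro y hy hdist
    have hyR : y ∈ R := hball y hy (lt_of_lt_of_le hdist (min_le_left _ _))
    refine ⟨hyR, hy, ?_⟩
    have h2 : ⟪u, y - x₀⟫_ℝ = ⟪u, y⟫_ℝ - ⟪u, x₀⟫_ℝ := inner_sub_right u y x₀
    have h3 : |⟪u, y - x₀⟫_ℝ| ≤ ‖u‖ * ‖y - x₀‖ := abs_real_inner_le_norm _ _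
    rw [hu, one_mul, ← dist_eq_norm] at h3
    have h4 := (abs_le.1 h3).1
    have h5 : dist y x₀ < ⟪u, x₀⟫_ℝ := lt_of_lt_of_le hdist (min_le_right _ _)
    linarith
  have hZne : R ∩ Hemi u ≠ R := by
    intro heq
    have hz : z₀ ∈ R ∩ Hemi u := by rw [heq]; exact hz₀R
    exact absurd hz.2.2 (not_le.2 hz₀)
  have hlt := hred.2 (R ∩ Hemi u) ⟨hZconv, hZclosed, ⟨x₀, hZint⟩⟩ Set.inter_subset_left hZne
  -- extract a lune of thickness < thick R containing Z
  have hSZne : {t | ∃ g h, IsLune g h ∧ R ∩ Hemi u ⊆ Lune g h ∧ lthick g h = t}.Nonempty := by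
    obtain ⟨t₀, g₀, h₀, hl₀, hsub₀, ht₀⟩ := hSne
    exact ⟨t₀, g₀, h₀, hl₀, fun z hz => hsub₀ hz.1, ht₀⟩
  obtain ⟨t, ⟨g, h, hlune, hZsub, rfl⟩, htlt⟩ :=
    (csInf_lt_iff (thick_bddBelow (R ∩ Hemi u)) hSZne).1 hlt
  have hgu : ‖g‖ = 1 := hlune.1
  have hhu : ‖h‖ = 1 := hlune.2.1
  have hne_gh : g ≠ h := hlune.2.2.1
  have hnin : ⟪g, h⟫_ℝ ≠ -1 := by
    intro hcon'
    have hcon2 : h = -g := (inner_eq_neg_one_iff hgu hhu).1 hcon'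
    apply hlune.2.2.2
    rw [hcon2, neg_neg]
  rw [lthick_eq hgu hhu hne_gh hnin] at htlt
  have harccos : π - thick R < Real.arccos ⟪g, h⟫_ℝ := by linarith
  -- but the duality bound forces the opposite
  have hb := dual_pair_bound hRs hRa hRarc hRc hRne hu hα0.le hα1
    (fun x y hx hxn hy hyn => pair_bound hRs hx₀ hx hxn hy hyn hw0)
    hall hgu hhu
    (fun z hz huz => (hZsub ⟨hz, hRs hz, huz⟩).1.2)
    (fun z hz huz => (hZsub ⟨hz, hRs hz, huz⟩).2.2)
  have hle2 : Real.arccos ⟪g, h⟫_ℝ ≤ π - thick R := by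
    have h1 := arccos_le_arccos' hb
    rwa [Real.arccos_cos hβ0 (by linarith [Real.pi_pos])] at h1
  linarith

/-- Existence of a supporting hemisphere at every boundary point. -/
lemma exists_support {R : Set (Esp n)} (hbody : SphBody R) {p : Esp n}
    (hp : p ∈ sphBoundary R) : ∃ m, SupportsAt R m p := by
  obtain ⟨⟨hRs, hRa, hRarc⟩, hRc, x₀, hx₀⟩ := hbody
  obtain ⟨hpR, hpni⟩ := hp
  have hRne : R.Nonempty := ⟨x₀, sphInterior_subset hx₀⟩
  have hKconv : Convex ℝ (cone R) := cone_convex hRs hRa hRarc hRne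
  have hx₀mem := hx₀
  obtain ⟨hx₀u', ε, hε, hball⟩ := hx₀
  have hx₀u : ‖x₀‖ = 1 := hx₀u'
  have hx₀int : x₀ ∈ interior (cone R) := by
    rw [mem_interior]
    refine ⟨Metric.ball x₀ (min (ε / 2) (1 / 2)), ?_, Metric.isOpen_ball,
      Metric.mem_ball_self (by positivity)⟩
    intro z hz
    rw [Metric.mem_ball, dist_eq_norm] at hz
    have hz1 : ‖z - x₀‖ < 1 / 2 := lt_of_lt_of_le hz (min_le_right _ _)
    have hz2 : ‖z - x₀‖ < ε / 2 := lt_of_lt_of_le hz (min_le_left _ _)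
    have hzn : 1 / 2 < ‖z‖ := by
      have h1 : ‖x₀‖ - ‖z‖ ≤ ‖x₀ - z‖ := norm_sub_norm_le _ _
      rw [norm_sub_rev] at h1
      rw [hx₀u] at h1
      linarith
    have hzn0 : z ≠ 0 := by
      intro h0; rw [h0, norm_zero] at hzn; linarith
    have hzhat : ‖z‖⁻¹ • z ∈ R := by
      apply hball
      · rw [mem_usphere, norm_smul, Real.norm_eq_abs, abs_of_nonneg (by positivity),
          inv_mul_cancel₀ (by linarith)]
      · have hzne : ‖z‖ ≠ 0 := by intro h0; rw [h0] at hzn; linarith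
        have h1 : ‖‖z‖⁻¹ • z - z‖ = |1 - ‖z‖| := by
          have hrw : ‖z‖⁻¹ • z - z = (‖z‖⁻¹ - 1) • z := by rw [sub_smul, one_smul]
          have hident : (‖z‖⁻¹ - 1) * ‖z‖ = 1 - ‖z‖ := by field_simp
          rw [hrw, norm_smul, Real.norm_eq_abs]
          calc |‖z‖⁻¹ - 1| * ‖z‖ = |‖z‖⁻¹ - 1| * |‖z‖| := by
                rw [abs_of_nonneg (norm_nonneg z)]
            _ = |(‖z‖⁻¹ - 1) * ‖z‖| := (abs_mul _ _).symm
            _ = |1 - ‖z‖| := by rw [hident]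
        have h2 : |1 - ‖z‖| ≤ ‖z - x₀‖ := by
          have h3 : |‖x₀‖ - ‖z‖| ≤ ‖x₀ - z‖ := abs_norm_sub_norm_le _ _
          rw [hx₀u, norm_sub_rev] at h3
          exact h3
        have h4 : dist (‖z‖⁻¹ • z) x₀ ≤ ‖‖z‖⁻¹ • z - z‖ + ‖z - x₀‖ := by
          rw [dist_eq_norm]
          have hrw : ‖z‖⁻¹ • z - x₀ = (‖z‖⁻¹ • z - z) + (z - x₀) := by abel
          rw [hrw]
          exact norm_add_le _ _
        rw [h1] at h4
        linarith
    exact ⟨‖z‖, norm_nonneg z, _, hzhat, (smul_inv_smul₀ (by intro h0; rw [h0] at hzn; linarith : ‖z‖ ≠ 0) z).symm⟩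
  have hpnint : p ∉ interior (cone R) := by
    intro hpint
    apply hpni
    obtain ⟨ρ, hρ, hball'⟩ := Metric.isOpen_iff.1 isOpen_interior p hpint
    refine ⟨hRs hpR, ρ, hρ, ?_⟩
    intro y hyu hdist
    have hyK : y ∈ cone R := interior_subset (hball' (by rw [Metric.mem_ball]; exact hdist))
    obtain ⟨t, htn, x, hxR, hyeq⟩ := hyK
    have hty : ‖y‖ = 1 := hyu
    rw [hyeq, norm_smul, Real.norm_eq_abs, abs_of_nonneg htn, hRs hxR, mul_one] at hty
    rw [hyeq, hty, one_smul]
    exact hxR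
  obtain ⟨f, hf⟩ := geometric_hahn_banach_open_point hKconv.interior isOpen_interior hpnint
  have hfK : ∀ a ∈ cone R, f a ≤ f p := by
    intro a ha
    set sq : ℕ → Esp n := fun k => (1 / (k + 1) : ℝ) • x₀ + ((1 : ℝ) - 1 / (k + 1)) • a with hsq
    have hseq : ∀ k : ℕ, f (sq k) < f p := by
      intro k
      apply hf
      have hkpos : (0 : ℝ) < 1 / ((k : ℝ) + 1) := by positivity
      have hk1 : (1 : ℝ) / ((k : ℝ) + 1) ≤ 1 := by
        rw [div_le_one (by positivity)]
        linarith [show (0 : ℝ) ≤ (k : ℝ) from Nat.cast_nonneg k]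
      exact hKconv.combo_interior_closure_mem_interior hx₀int (subset_closure ha)
        hkpos (by linarith) (by ring)
    have hlim0 : Tendsto (fun k : ℕ => (1 / (k + 1) : ℝ)) atTop (𝓝 0) :=
      tendsto_one_div_add_atTop_nhds_zero_nat
    have hlim : Tendsto sq atTop (𝓝 a) := by
      have h1 : Tendsto (fun k : ℕ => (1 / (k + 1) : ℝ) • x₀) atTop (𝓝 ((0 : ℝ) • x₀)) :=
        hlim0.smul_const x₀
      have h2 : Tendsto (fun k : ℕ => ((1 : ℝ) - 1 / (k + 1)) • a) atTop (𝓝 ((1 : ℝ) • a)) := by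
        have h3 := (tendsto_const_nhds (x := (1 : ℝ)) (f := (atTop : Filter ℕ))).sub hlim0
        rw [sub_zero] at h3
        exact h3.smul_const a
      have h4 := h1.add h2
      rw [zero_smul, one_smul, zero_add] at h4
      exact h4
    have hflim : Tendsto (fun k => f (sq k)) atTop (𝓝 (f a)) :=
      (f.continuous.tendsto a).comp hlim
    exact le_of_tendsto hflim (Filter.Eventually.of_forall fun k => (hseq k).le)
  have hfp0 : f p = 0 := by
    have h2p := hfK ((2 : ℝ) • p) (smul_mem_cone (sub_mem_cone hpR) (by norm_num))
    rw [map_smul, smul_eq_mul] at h2p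
    have h0 := hfK 0 (zero_mem_cone hRne)
    rw [map_zero] at h0
    linarith
  have hfneg : ∀ z ∈ cone R, f z ≤ 0 := fun z hz => by
    have := hfK z hz; linarith
  set v : Esp n := (InnerProductSpace.toDual ℝ (Esp n)).symm f with hv
  have hvf : ∀ w : Esp n, ⟪v, w⟫_ℝ = f w := fun w => InnerProductSpace.toDual_symm_apply
  have hvne : v ≠ 0 := by
    intro h0
    have hfx₀ := hf x₀ hx₀int
    rw [hfp0, ← hvf, h0, inner_zero_left] at hfx₀
    linarith
  have hnv : 0 < ‖v‖ := norm_pos_iff.2 hvne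
  refine ⟨-(‖v‖⁻¹ • v), ?_, ?_, hpR, ?_⟩
  · rw [mem_usphere, norm_neg, norm_smul, Real.norm_eq_abs,
      abs_of_nonneg (by positivity), inv_mul_cancel₀ hnv.ne']
  · intro z hz
    refine ⟨hRs hz, ?_⟩
    rw [inner_neg_left, real_inner_smul_left, hvf]
    have := hfneg z (sub_mem_cone hz)
    have hinv : 0 ≤ ‖v‖⁻¹ := by positivity
    nlinarith
  · show ⟪-(‖v‖⁻¹ • v), p⟫_ℝ = 0
    rw [inner_neg_left, real_inner_smul_left, hvf, hfp0]
    ring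

end SRBaux
end SRBaux6

noncomputable section SRBaux7
namespace SRBaux
open Real Set Filter
open scoped InnerProductSpace RealInnerProductSpace Topology
variable {n : ℕ}

set_option maxHeartbeats 2000000 in
lemma aux_r2 {r i : ℝ} (h : r ^ 2 = 2 + 2 * i) (hr : 0 ≤ r) (h1 : i < 1) (h2 : -1 < i) :
    0 < r ∧ r < 2 := by constructor <;> nlinarith

lemma aux_norm {x c : ℝ} (hc : 0 ≤ c) (hx : 0 ≤ x) (h : x ^ 2 = 1 + c ^ 2) :
    1 ≤ x ∧ x ≤ 1 + c := by constructor <;> nlinarith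

lemma aux_gap {α r : ℝ} (hα : 0 < α) (hr : 0 < r) (h2 : r < 2) : α < 2 * α / r := by
  rw [lt_div_iff₀ hr]
  nlinarith

set_option maxHeartbeats 2000000 in
/-- Uniqueness of the supporting hemisphere at any point, for reduced bodies of
thickness exceeding `π/2`. -/
lemma unique_support {R : Set (Esp n)} (hred : Reduced R) (ht : π / 2 < thick R)
    {p m₁ m₂ : Esp n} (h₁ : SupportsAt R m₁ p) (h₂ : SupportsAt R m₂ p) : m₁ = m₂ := by
  by_contra hm
  obtain ⟨hm₁u', hs₁, hpR, hip₁⟩ := h₁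
  obtain ⟨hm₂u', hs₂, -, hip₂⟩ := h₂
  have hm₁u : ‖m₁‖ = 1 := hm₁u'
  have hm₂u : ‖m₂‖ = 1 := hm₂u'
  have hip₁ : ⟪m₁, p⟫_ℝ = 0 := hip₁
  have hip₂ : ⟪m₂, p⟫_ℝ = 0 := hip₂
  obtain ⟨⟨hRs, hRa, hRarc⟩, hRc, x₀, hx₀⟩ := hred.1
  have hpu : ‖p‖ = 1 := hRs hpR
  have hm₁n : ∀ z ∈ R, 0 ≤ ⟪m₁, z⟫_ℝ := fun z hz => (hs₁ hz).2
  have hm₂n : ∀ z ∈ R, 0 ≤ ⟪m₂, z⟫_ℝ := fun z hz => (hs₂ hz).2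
  -- thickness facts
  have hSne : {t | ∃ g h, IsLune g h ∧ R ⊆ Lune g h ∧ lthick g h = t}.Nonempty := by
    by_contra hS
    rw [Set.not_nonempty_iff_eq_empty] at hS
    have h0 : thick R = 0 := by rw [thick, hS, Real.sInf_empty]
    rw [h0] at ht
    linarith [Real.pi_pos]
  have hw0 : 0 ≤ thick R := thick_nonneg_of_mem hSne
  have hβ0 : 0 ≤ π - thick R := by
    obtain ⟨t₀, g₀, h₀, hl₀, hsub₀, ht₀⟩ := hSne
    have hle := thick_le hl₀ hsub₀
    have h2 : lthick g₀ h₀ ≤ π := Real.arccos_le_pi _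
    linarith
  set α : ℝ := Real.cos (π - thick R) with hαdef
  have hα0 : 0 < α := by
    rw [hαdef]
    exact Real.cos_pos_of_mem_Ioo ⟨by linarith [Real.pi_pos], by linarith⟩
  have hα1 : α ≤ 1 := by rw [hαdef]; exact Real.cos_le_one _
  clear_value α
  -- m₁ and m₂ are neither equal nor antipodal
  have h12lt : ⟪m₁, m₂⟫_ℝ < 1 := lt_of_le_of_ne (inner_le_one hm₁u hm₂u)
    (fun hcon => hm ((inner_eq_one_iff hm₁u hm₂u).1 hcon))
  have h12gt : -1 < ⟪m₁, m₂⟫_ℝ := by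
    rcases (neg_one_le_inner hm₁u hm₂u).lt_or_eq with h' | h'
    · exact h'
    · exfalso
      have hcon : m₂ = -m₁ := (inner_eq_neg_one_iff hm₁u hm₂u).1 h'.symm
      have hpos := interior_inner_pos hx₀ hm₁u hm₁n
      have hneg := hm₂n x₀ (sphInterior_subset hx₀)
      rw [hcon, inner_neg_left] at hneg
      linarith
  -- the midpoint normal μ
  set r2 : ℝ := ‖m₁ + m₂‖ with hr2def
  have hr2sq : r2 ^ 2 = 2 + 2 * ⟪m₁, m₂⟫_ℝ := by
    rw [hr2def, norm_add_sq_real, hm₁u, hm₂u]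
    ring
  have hr2nonneg : 0 ≤ r2 := by rw [hr2def]; exact norm_nonneg _
  clear_value r2
  have hr2pos : 0 < r2 := (aux_r2 hr2sq hr2nonneg h12lt h12gt).1
  have hr2lt : r2 < 2 := (aux_r2 hr2sq hr2nonneg h12lt h12gt).2
  set μ : Esp n := r2⁻¹ • (m₁ + m₂) with hμdef
  clear_value μ
  have hμu : ‖μ‖ = 1 := by
    rw [hμdef, norm_smul, Real.norm_eq_abs, abs_of_nonneg (by positivity), ← hr2def,
      inv_mul_cancel₀ hr2pos.ne']
  have hμn : ∀ z ∈ R, 0 ≤ ⟪μ, z⟫_ℝ := by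
    intro z hz
    rw [hμdef, real_inner_smul_left, inner_add_left]
    have := hm₁n z hz; have := hm₂n z hz
    positivity
  have hμp : ⟪μ, p⟫_ℝ = 0 := by
    rw [hμdef, real_inner_smul_left, inner_add_left, hip₁, hip₂]
    ring
  have ha₀ : 0 < ⟪μ, x₀⟫_ℝ := interior_inner_pos hx₀ hμu hμn
  -- choice of the tilting parameter
  set t₁ : ℝ := ⟪μ, x₀⟫_ℝ / (2 * (|⟪p, x₀⟫_ℝ| + 1)) with ht₁def
  clear_value t₁
  have ht₁pos : 0 < t₁ := by
    rw [ht₁def]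
    apply div_pos ha₀
    positivity
  set t₂ : ℝ := (2 * α / r2 - α) / (2 * (α + 1)) with ht₂def
  clear_value t₂
  have hgap : α < 2 * α / r2 := aux_gap hα0 hr2pos hr2lt
  have ht₂pos : 0 < t₂ := by
    rw [ht₂def]
    apply div_pos (by linarith)
    positivity
  set tt : ℝ := min t₁ t₂ with httdef
  clear_value tt
  have htt0 : 0 < tt := by rw [httdef]; exact lt_min ht₁pos ht₂pos
  have htt1 : tt ≤ t₁ := by rw [httdef]; exact min_le_left _ _
  have htt2 : tt ≤ t₂ := by rw [httdef]; exact min_le_right _ _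
  -- the tilted vector u
  set v : Esp n := μ - tt • p with hvdef
  clear_value v
  have hvsq : ‖v‖ ^ 2 = 1 + tt ^ 2 := by
    rw [hvdef, ← real_inner_self_eq_norm_sq]
    simp only [inner_sub_left, inner_sub_right, real_inner_smul_left, real_inner_smul_right,
      inner_self_one hμu, inner_self_one hpu, hμp, real_inner_comm μ p]
    ring
  have hnv1 : 1 ≤ ‖v‖ := (aux_norm htt0.le (norm_nonneg v) hvsq).1
  have hnvle : ‖v‖ ≤ 1 + tt := (aux_norm htt0.le (norm_nonneg v) hvsq).2
  have hnvpos : 0 < ‖v‖ := by linarith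
  set u : Esp n := ‖v‖⁻¹ • v with hudef
  clear_value u
  have huu : ‖u‖ = 1 := by
    rw [hudef, norm_smul, Real.norm_eq_abs, abs_of_nonneg (by positivity),
      inv_mul_cancel₀ hnvpos.ne']
  have hvp : ⟪v, p⟫_ℝ = -tt := by
    rw [hvdef, inner_sub_left, real_inner_smul_left, hμp, inner_self_one hpu]
    ring
  have hup : ⟪u, p⟫_ℝ < 0 := by
    rw [hudef, real_inner_smul_left, hvp]
    exact mul_neg_of_pos_of_neg (by positivity) (by linarith)
  have hvx₀ : ⟪v, x₀⟫_ℝ = ⟪μ, x₀⟫_ℝ - tt * ⟪p, x₀⟫_ℝ := by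
    rw [hvdef, inner_sub_left, real_inner_smul_left]
  have hux₀ : 0 < ⟪u, x₀⟫_ℝ := by
    rw [hudef, real_inner_smul_left, hvx₀]
    have hb : tt * ⟪p, x₀⟫_ℝ < ⟪μ, x₀⟫_ℝ := by
      have hb1 : tt * ⟪p, x₀⟫_ℝ ≤ tt * |⟪p, x₀⟫_ℝ| :=
        mul_le_mul_of_nonneg_left (le_abs_self _) htt0.le
      have hb2 : tt * |⟪p, x₀⟫_ℝ| ≤ t₁ * (|⟪p, x₀⟫_ℝ| + 1) := by
        have k1 : tt * |⟪p, x₀⟫_ℝ| ≤ t₁ * |⟪p, x₀⟫_ℝ| :=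
          mul_le_mul_of_nonneg_right htt1 (abs_nonneg _)
        have k2 : t₁ * |⟪p, x₀⟫_ℝ| ≤ t₁ * (|⟪p, x₀⟫_ℝ| + 1) :=
          mul_le_mul_of_nonneg_left (by linarith) ht₁pos.le
        linarith
      have hb3 : t₁ * (|⟪p, x₀⟫_ℝ| + 1) = ⟪μ, x₀⟫_ℝ / 2 := by
        rw [ht₁def]
        field_simp
      linarith
    exact mul_pos (by positivity) (by linarith)
  -- u is not a hemisphere containing R, so some normal is far from u
  have hexx : ∃ x : Esp n, ‖x‖ = 1 ∧ (∀ z ∈ R, 0 ≤ ⟪x, z⟫_ℝ) ∧ ⟪u, x⟫_ℝ < α := by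
    by_contra hno
    push_neg at hno
    have hall : ∀ x : Esp n, ‖x‖ = 1 → (∀ z ∈ R, 0 ≤ ⟪x, z⟫_ℝ) →
        Real.cos (π - thick R) ≤ ⟪u, x⟫_ℝ := fun x hx hxn => hαdef ▸ hno x hx hxn
    have := hemi_of_alpha hred ht hx₀ huu hux₀ hall p hpR
    linarith
  obtain ⟨x, hxu, hxn, hux⟩ := hexx
  -- lower bound on ⟪μ, x⟫
  have hb₁ : α ≤ ⟪m₁, x⟫_ℝ := by
    rw [hαdef]; exact pair_bound hRs hx₀ hm₁u hm₁n hxu hxn hw0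
  have hb₂ : α ≤ ⟪m₂, x⟫_ℝ := by
    rw [hαdef]; exact pair_bound hRs hx₀ hm₂u hm₂n hxu hxn hw0
  have hμx : ⟪μ, x⟫_ℝ = r2⁻¹ * (⟪m₁, x⟫_ℝ + ⟪m₂, x⟫_ℝ) := by
    rw [hμdef, real_inner_smul_left, inner_add_left]
  have hlow : 2 * α / r2 ≤ ⟪μ, x⟫_ℝ := by
    rw [hμx, div_le_iff₀ hr2pos]
    have h5 : 2 * α ≤ ⟪m₁, x⟫_ℝ + ⟪m₂, x⟫_ℝ := by linarith
    have h6 : r2⁻¹ * (⟪m₁, x⟫_ℝ + ⟪m₂, x⟫_ℝ) * r2 = ⟪m₁, x⟫_ℝ + ⟪m₂, x⟫_ℝ := by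
      field_simp
    rw [h6]
    exact h5
  -- upper bound on ⟪μ, x⟫
  have hvx : ⟪v, x⟫_ℝ = ‖v‖ * ⟪u, x⟫_ℝ := by
    rw [hudef, real_inner_smul_left]
    field_simp
  have hvx2 : ⟪v, x⟫_ℝ = ⟪μ, x⟫_ℝ - tt * ⟪p, x⟫_ℝ := by
    rw [hvdef, inner_sub_left, real_inner_smul_left]
  have hpx1 : ⟪p, x⟫_ℝ ≤ 1 := inner_le_one hpu hxu
  have hhigh : ⟪μ, x⟫_ℝ < α + tt * (α + 1) := by
    have h7 : ‖v‖ * ⟪u, x⟫_ℝ < ‖v‖ * α := by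
      exact mul_lt_mul_of_pos_left hux hnvpos
    have h8 : ‖v‖ * α ≤ (1 + tt) * α := mul_le_mul_of_nonneg_right hnvle hα0.le
    have h9 : tt * ⟪p, x⟫_ℝ ≤ tt := by
      have := mul_le_mul_of_nonneg_left hpx1 htt0.le
      linarith [this]
    have h10 : ⟪μ, x⟫_ℝ = ‖v‖ * ⟪u, x⟫_ℝ + tt * ⟪p, x⟫_ℝ := by
      rw [← hvx]
      linarith [hvx2]
    have e : (1 + tt) * α + tt = α + tt * (α + 1) := by ring
    linarith
  -- the contradiction
  have hfin : tt * (α + 1) ≤ (2 * α / r2 - α) / 2 := by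
    have := mul_le_mul_of_nonneg_right htt2 (by positivity : (0:ℝ) ≤ α + 1)
    rw [ht₂def] at this
    calc tt * (α + 1) ≤ (2 * α / r2 - α) / (2 * (α + 1)) * (α + 1) := this
      _ = (2 * α / r2 - α) / 2 := by
          field_simp
  have : α + tt * (α + 1) < 2 * α / r2 := by linarith
  linarith

end SRBaux
end SRBaux7

/-- Every reduced spherical convex body R ⊂ S^d of thickness greater than π/2
is smooth: at every boundary point there is exactly one supporting hemisphere. -/
theorem stmt_15 (d : ℕ) (R : Set (Esp (d + 1))) (hR : Reduced R)
    (ht : Real.pi / 2 < thick R) :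
    ∀ p ∈ sphBoundary R, SmoothPoint R p := by
  intro p hp
  obtain ⟨m, hm⟩ := SRBaux.exists_support hR.1 hp
  exact ⟨m, hm, fun y hy => SRBaux.unique_support hR ht hy hm⟩
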